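/- Let F(S,A) = Λ − (β_h(μ_h+μ)/σ_1) S A − μ S and G(S,A) = β_h A S − (σ_1+μ) A be the right-hand side of the reduced planar HIV system, and let φ(S,A) = 1/(S A). Then for all S > 0 and A > 0, the divergence ∂/∂S [φ(S,A) F(S,A)] + ∂/∂A [φ(S,A) G(S,A)] equals −Λ/(A S²), which is strictly negative. -/

import Mathlib

/-- Dulac function computation for the reduced planar HIV system: with
`φ(S,A) = 1/(SA)`, the divergence of `φ·(F,G)` equals `-Λ/(A S²) < 0` on the positive
quadrant. -/
theorem hiv_dulac_divergence
    (Lam bh mu muh s1 : ℝ)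
    (hLam : 0 < Lam) (hbh : 0 < bh) (hmu : 0 < mu) (hmuh : 0 < muh) (hs1 : 0 < s1) :
    ∀ S A : ℝ, 0 < S → 0 < A →
      (deriv (fun s : ℝ => (1 / (s * A)) *
          (Lam - bh * (muh + mu) / s1 * s * A - mu * s)) S
        + deriv (fun a : ℝ => (1 / (S * a)) *
          (bh * a * S - (s1 + mu) * a)) A
        = -Lam / (A * S ^ 2)) ∧
      -Lam / (A * S ^ 2) < 0 := by
  intro S A hS hA
  have hSA : S * A ≠ 0 := by positivity
  constructor
  · -- first derivative
    have hn1 : HasDerivAt (fun s : ℝ => Lam - bh * (muh + mu) / s1 * s * A - mu * s)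
        (0 - bh * (muh + mu) / s1 * 1 * A - mu * 1) S := by
      exact ((hasDerivAt_const S Lam).sub
        (((hasDerivAt_id S).const_mul (bh * (muh + mu) / s1)).mul_const A)).sub
        ((hasDerivAt_id S).const_mul mu)
    have hd1 : HasDerivAt (fun s : ℝ => s * A) (1 * A) S :=
      (hasDerivAt_id S).mul_const A
    have h1 : HasDerivAt (fun s : ℝ => (1 / (s * A)) *
        (Lam - bh * (muh + mu) / s1 * s * A - mu * s))
        (((0 - bh * (muh + mu) / s1 * 1 * A - mu * 1) * (S * A)
          - (Lam - bh * (muh + mu) / s1 * S * A - mu * S) * (1 * A)) / (S * A) ^ 2) S := by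
      have := hn1.div hd1 hSA
      refine this.congr_of_eventuallyEq (Filter.Eventually.of_forall fun s => ?_)
      simp only [Pi.div_apply]
      ring
    have hn2 : HasDerivAt (fun a : ℝ => bh * a * S - (s1 + mu) * a)
        (bh * 1 * S - (s1 + mu) * 1) A := by
      exact (((hasDerivAt_id A).const_mul bh).mul_const S).sub
        ((hasDerivAt_id A).const_mul (s1 + mu))
    have hd2 : HasDerivAt (fun a : ℝ => S * a) (S * 1) A :=
      (hasDerivAt_id A).const_mul S
    have h2 : HasDerivAt (fun a : ℝ => (1 / (S * a)) * (bh * a * S - (s1 + mu) * a))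
        (((bh * 1 * S - (s1 + mu) * 1) * (S * A)
          - (bh * A * S - (s1 + mu) * A) * (S * 1)) / (S * A) ^ 2) A := by
      have := hn2.div hd2 hSA
      refine this.congr_of_eventuallyEq (Filter.Eventually.of_forall fun s => ?_)
      simp only [Pi.div_apply]
      ring
    rw [h1.deriv, h2.deriv]
    field_simp
    ring
  · have : 0 < Lam / (A * S ^ 2) := by positivity
    rw [neg_div]; linarith
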